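/- arXiv:2305.10461 — 4 statements merged into one kernel-verified Lean document; each statement's English description precedes it below -/
import Mathlib

section
/- For positive definite n×n matrices X, Y, the congruence map Z ↦ C* Z C (for invertible C) applied to a weighted geometric mean satisfies: C*(X #_t Y)C = (C* X C) #_t (C* Y C) for all t ∈ [0,1]. -/
open Matrix
open scoped ComplexOrder

noncomputable def mrpow {n : ℕ} (A : Matrix (Fin n) (Fin n) ℂ) (t : ℝ) :
    Matrix (Fin n) (Fin n) ℂ :=
  if h : A.IsHermitian then
    (h.eigenvectorUnitary : Matrix (Fin n) (Fin n) ℂ) *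
      Matrix.diagonal (fun i => ((h.eigenvalues i ^ t : ℝ) : ℂ)) *
      star (h.eigenvectorUnitary : Matrix (Fin n) (Fin n) ℂ)
  else 0

/-- Weighted geometric mean `A #_t B = A^{1/2} (A^{-1/2} B A^{-1/2})^t A^{1/2}`. -/
noncomputable def gmean {n : ℕ} (t : ℝ) (A B : Matrix (Fin n) (Fin n) ℂ) :
    Matrix (Fin n) (Fin n) ℂ :=
  mrpow A (1/2) * mrpow (mrpow A (-(1/2)) * B * mrpow A (-(1/2))) t * mrpow A (1/2)

/-- `|X| = (XᴴX)^{1/2}`. -/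
noncomputable def matAbs {n : ℕ} (X : Matrix (Fin n) (Fin n) ℂ) : Matrix (Fin n) (Fin n) ℂ :=
  mrpow (Xᴴ * X) (1/2)

/-- the `j`-th largest singular value of `X` (0-indexed: `sVal X 0` is the largest). -/
noncomputable def sVal {n : ℕ} (X : Matrix (Fin n) (Fin n) ℂ) (j : Fin n) : ℝ :=
  Real.sqrt (((Matrix.isHermitian_conjTranspose_mul_self X).eigenvalues ∘
    Tuple.sort (Matrix.isHermitian_conjTranspose_mul_self X).eigenvalues) j.rev)

/-- The block `[[A, X],[Xᴴ, B]]` is PPT. -/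
def IsPPT {n : ℕ} (A X B : Matrix (Fin n) (Fin n) ℂ) : Prop :=
  (Matrix.fromBlocks A X Xᴴ B).PosSemidef ∧ (Matrix.fromBlocks A Xᴴ X B).PosSemidef

namespace GmeanAux

variable {n : ℕ}

lemma spectrum_pos {A : Matrix (Fin n) (Fin n) ℂ} (hA : A.PosDef) :
    ∀ x ∈ spectrum ℝ A, 0 < x := by
  intro x hx
  rw [Matrix.IsHermitian.spectrum_real_eq_range_eigenvalues hA.isHermitian] at hx
  obtain ⟨i, rfl⟩ := hx
  exact hA.eigenvalues_pos i

lemma contOn {A : Matrix (Fin n) (Fin n) ℂ} (hA : A.PosDef) (t : ℝ) :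
    ContinuousOn (fun x : ℝ => x ^ t) (spectrum ℝ A) := fun x hx =>
  (Real.continuousAt_rpow_const x t (Or.inl (spectrum_pos hA x hx).ne')).continuousWithinAt

lemma mrpow_eq_cfc {A : Matrix (Fin n) (Fin n) ℂ} (hA : A.IsHermitian) (t : ℝ) :
    mrpow A t = cfc (fun x : ℝ => x ^ t) A := by
  rw [hA.cfc_eq, mrpow, dif_pos hA]
  rfl

lemma mrpow_isHermitian {A : Matrix (Fin n) (Fin n) ℂ} (hA : A.IsHermitian) (t : ℝ) :
    (mrpow A t).IsHermitian := by
  rw [mrpow_eq_cfc hA t]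
  exact cfc_predicate _ A

lemma mrpow_mul_mrpow {A : Matrix (Fin n) (Fin n) ℂ} (hA : A.PosDef) (s t : ℝ) :
    mrpow A s * mrpow A t = mrpow A (s + t) := by
  rw [mrpow_eq_cfc hA.1, mrpow_eq_cfc hA.1, mrpow_eq_cfc hA.1,
    ← cfc_mul _ _ A (contOn hA s) (contOn hA t)]
  exact cfc_congr fun x hx => (Real.rpow_add (spectrum_pos hA x hx) s t).symm

lemma mrpow_one {A : Matrix (Fin n) (Fin n) ℂ} (hA : A.PosDef) : mrpow A 1 = A := by
  rw [mrpow_eq_cfc hA.1]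
  have h : cfc (fun x : ℝ => x ^ (1:ℝ)) A = cfc (fun x : ℝ => x) A :=
    cfc_congr fun x _ => Real.rpow_one x
  rw [h]; exact cfc_id' ℝ A hA.1

lemma mrpow_zero {A : Matrix (Fin n) (Fin n) ℂ} (hA : A.PosDef) : mrpow A 0 = 1 := by
  rw [mrpow_eq_cfc hA.1]
  have h : cfc (fun x : ℝ => x ^ (0:ℝ)) A = cfc (fun _ : ℝ => (1:ℝ)) A :=
    cfc_congr fun x _ => Real.rpow_zero x
  rw [h]; exact cfc_const_one ℝ A hA.1

end GmeanAux

namespace GmeanAux2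
variable {n : ℕ}

lemma posDef_conj {A C : Matrix (Fin n) (Fin n) ℂ} (hA : A.PosDef) (hC : IsUnit C) :
    (Cᴴ * A * C).PosDef := by
  exact hA.conjTranspose_mul_mul_same (Matrix.mulVec_injective_iff_isUnit.mpr hC)

/-- Conjugation by a unitary as a star algebra homomorphism. -/
noncomputable def conjSAH (U : Matrix (Fin n) (Fin n) ℂ)
    (hU : U ∈ unitary (Matrix (Fin n) (Fin n) ℂ)) :
    Matrix (Fin n) (Fin n) ℂ →⋆ₐ[ℂ] Matrix (Fin n) (Fin n) ℂ where
  toFun z := star U * z * U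
  map_one' := by simpa using hU.1
  map_mul' a b := by
    have h : U * star U = 1 := hU.2
    calc star U * (a * b) * U = star U * a * (U * star U) * b * U := by
          rw [h]; simp [Matrix.mul_assoc]
      _ = star U * a * U * (star U * b * U) := by simp [Matrix.mul_assoc]
  map_zero' := by simp
  map_add' a b := by simp [Matrix.mul_add, Matrix.add_mul]
  commutes' c := by
    simp [Algebra.algebraMap_eq_smul_one, Matrix.mul_smul, Matrix.smul_mul, hU.1]
  map_star' a := by
    simp [StarMul.star_mul, Matrix.mul_assoc]

end GmeanAux2
namespace GmeanAux4
open GmeanAux GmeanAux2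
variable {n : ℕ}

lemma mrpow_conj {A U : Matrix (Fin n) (Fin n) ℂ} (hA : A.PosDef)
    (hU : U ∈ unitary (Matrix (Fin n) (Fin n) ℂ)) (t : ℝ) :
    mrpow (star U * A * U) t = star U * mrpow A t * U := by
  have hsa : IsSelfAdjoint (star U * A * U) := by
    rw [isSelfAdjoint_iff]
    simp only [StarMul.star_mul, star_star, Matrix.star_eq_conjTranspose, conjTranspose_conjTranspose, hA.1.eq,
      Matrix.mul_assoc]
  have hherm : (star U * A * U).IsHermitian := hsa
  have hcont : Continuous (conjSAH U hU) :=
    (continuous_const.mul continuous_id).mul continuous_const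
  have h := StarAlgHom.map_cfc (conjSAH U hU) (fun x : ℝ => x ^ t) A (contOn hA t) hcont hA.1 hsa
  rw [mrpow_eq_cfc hherm t, mrpow_eq_cfc hA.1 t]
  exact h.symm

end GmeanAux4


open GmeanAux GmeanAux2 GmeanAux4 in
theorem stmt_2 {n : ℕ} (X Y C : Matrix (Fin n) (Fin n) ℂ)
    (hX : X.PosDef) (hY : Y.PosDef) (hC : IsUnit C)
    (t : ℝ) (ht : t ∈ Set.Icc (0 : ℝ) 1) :
    Cᴴ * gmean t X Y * C = gmean t (Cᴴ * X * C) (Cᴴ * Y * C) := by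
  have hXC : (Cᴴ * X * C).PosDef := posDef_conj hX hC
  set S := mrpow X (1/2) with hS
  set S' := mrpow X (-(1/2)) with hS'
  set D := mrpow (Cᴴ * X * C) (1/2) with hD
  set D' := mrpow (Cᴴ * X * C) (-(1/2)) with hD'
  have hSS : S * S = X := by
    rw [hS, mrpow_mul_mrpow hX]; norm_num; exact mrpow_one hX
  have hSS' : S * S' = 1 := by
    rw [hS, hS', mrpow_mul_mrpow hX]; norm_num; exact mrpow_zero hX
  have hS'S : S' * S = 1 := by
    rw [hS, hS', mrpow_mul_mrpow hX]; norm_num; exact mrpow_zero hX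
  have hDD : D * D = Cᴴ * X * C := by
    rw [hD, mrpow_mul_mrpow hXC]; norm_num; exact mrpow_one hXC
  have hDD' : D * D' = 1 := by
    rw [hD, hD', mrpow_mul_mrpow hXC]; norm_num; exact mrpow_zero hXC
  have hD'D : D' * D = 1 := by
    rw [hD, hD', mrpow_mul_mrpow hXC]; norm_num; exact mrpow_zero hXC
  have hSh : Sᴴ = S := mrpow_isHermitian hX.1 _
  have hS'h : S'ᴴ = S' := mrpow_isHermitian hX.1 _
  have hDh : Dᴴ = D := mrpow_isHermitian hXC.1 _
  have hD'h : D'ᴴ = D' := mrpow_isHermitian hXC.1 _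
  -- associativity-friendly rewriters
  have hXw : ∀ W, S * (S * W) = X * W := fun W => by
    rw [← Matrix.mul_assoc, hSS]
  have hCXCw : ∀ W, Cᴴ * (X * (C * W)) = D * (D * W) := fun W => by
    rw [← Matrix.mul_assoc, ← Matrix.mul_assoc, ← hDD, Matrix.mul_assoc]
  have hSS'w : ∀ W, S * (S' * W) = W := fun W => by
    rw [← Matrix.mul_assoc, hSS', Matrix.one_mul]
  have hS'Sw : ∀ W, S' * (S * W) = W := fun W => by
    rw [← Matrix.mul_assoc, hS'S, Matrix.one_mul]
  have hD'Dw : ∀ W, D' * (D * W) = W := fun W => by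
    rw [← Matrix.mul_assoc, hD'D, Matrix.one_mul]
  have hDD'w : ∀ W, D * (D' * W) = W := fun W => by
    rw [← Matrix.mul_assoc, hDD', Matrix.one_mul]
  set U := S * C * D' with hUdef
  have hUs : star U = D' * (Cᴴ * S) := by
    rw [hUdef]
    simp only [StarMul.star_mul, Matrix.star_eq_conjTranspose, hD'h, hSh, Matrix.mul_assoc]
  have hU1 : star U * U = 1 := by
    rw [hUs, hUdef]
    simp only [Matrix.mul_assoc]
    rw [hXw, hCXCw, hD'Dw, hDD']
  have hUu : U ∈ unitary (Matrix (Fin n) (Fin n) ℂ) :=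
    ⟨hU1, (mul_eq_one_comm).mp hU1⟩
  have hS'unit : IsUnit S' := (Matrix.isUnit_iff_isUnit_det _).mpr (Matrix.isUnit_det_of_left_inverse hSS')
  have hM : (S' * Y * S').PosDef := by
    have h := posDef_conj hY hS'unit
    rwa [hS'h] at h
  have harg : D' * (Cᴴ * Y * C) * D' = star U * (S' * Y * S') * U := by
    rw [hUs, hUdef]
    simp only [Matrix.mul_assoc]
    rw [hS'Sw, hSS'w]
  simp only [gmean]
  rw [← hS, ← hS', ← hD, ← hD', harg, mrpow_conj hM hUu t, hUs, hUdef]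
  simp only [Matrix.mul_assoc]
  rw [hD'D, Matrix.mul_one, hDD'w]
end

section
/- If the block matrix H = [[A, X],[X*, B]] is positive semidefinite, then X can be written as X = A^{1/2} K B^{1/2} for some contraction K (i.e., a matrix K with operator norm at most 1). -/
open Matrix
open scoped ComplexOrder

variable {n : ℕ}

private lemma conj_mul_conj (U : Matrix.unitaryGroup (Fin n) ℂ) (d e : Fin n → ℂ) :
    ((U : Matrix (Fin n) (Fin n) ℂ) * diagonal d * star (U : Matrix (Fin n) (Fin n) ℂ)) *
      ((U : Matrix (Fin n) (Fin n) ℂ) * diagonal e * star (U : Matrix (Fin n) (Fin n) ℂ))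
      = (U : Matrix (Fin n) (Fin n) ℂ) * diagonal (fun i => d i * e i) *
        star (U : Matrix (Fin n) (Fin n) ℂ) := by
  have h1 : star (U : Matrix (Fin n) (Fin n) ℂ) * (U : Matrix (Fin n) (Fin n) ℂ) = 1 :=
    Unitary.coe_star_mul_self U
  calc ((U : Matrix (Fin n) (Fin n) ℂ) * diagonal d * star (U : Matrix (Fin n) (Fin n) ℂ)) *
      ((U : Matrix (Fin n) (Fin n) ℂ) * diagonal e * star (U : Matrix (Fin n) (Fin n) ℂ))
      = (U : Matrix (Fin n) (Fin n) ℂ) * diagonal d *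
        ((star (U : Matrix (Fin n) (Fin n) ℂ) * (U : Matrix (Fin n) (Fin n) ℂ)) *
          (diagonal e * star (U : Matrix (Fin n) (Fin n) ℂ))) := by
        simp only [mul_assoc]
    _ = _ := by
        rw [h1, one_mul, ← mul_assoc, mul_assoc (U : Matrix (Fin n) (Fin n) ℂ),
          diagonal_mul_diagonal]

private lemma isHermitian_conj_diag (U : Matrix.unitaryGroup (Fin n) ℂ) (f : Fin n → ℝ) :
    ((U : Matrix (Fin n) (Fin n) ℂ) * diagonal (fun i => (f i : ℂ)) *
      star (U : Matrix (Fin n) (Fin n) ℂ)).IsHermitian := by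
  rw [Matrix.star_eq_conjTranspose]
  exact isHermitian_mul_mul_conjTranspose _ (isHermitian_diagonal_of_self_adjoint _
    (by ext i; exact Complex.conj_ofReal _))

private lemma posSemidef_conj_diag (U : Matrix.unitaryGroup (Fin n) ℂ) {f : Fin n → ℝ}
    (hf : ∀ i, 0 ≤ f i) :
    ((U : Matrix (Fin n) (Fin n) ℂ) * diagonal (fun i => (f i : ℂ)) *
      star (U : Matrix (Fin n) (Fin n) ℂ)).PosSemidef := by
  rw [Matrix.star_eq_conjTranspose]
  exact (Matrix.PosSemidef.diagonal (fun i => by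
    simpa using Complex.zero_le_real.mpr (hf i))).mul_mul_conjTranspose_same _

private lemma mrpow_eq {A : Matrix (Fin n) (Fin n) ℂ} (h : A.IsHermitian) (t : ℝ) :
    mrpow A t = (h.eigenvectorUnitary : Matrix (Fin n) (Fin n) ℂ) *
      diagonal (fun i => ((h.eigenvalues i ^ t : ℝ) : ℂ)) *
      star (h.eigenvectorUnitary : Matrix (Fin n) (Fin n) ℂ) := dif_pos h

private lemma rpow_half_mul {x : ℝ} (hx : 0 ≤ x) :
    x ^ ((1:ℝ)/2) * x ^ (-((1:ℝ)/2)) = if x = 0 then 0 else 1 := by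
  rcases eq_or_lt_of_le hx with h0 | h0
  · simp [← h0, Real.zero_rpow]
  · rw [if_neg h0.ne', ← Real.rpow_add h0]
    norm_num

section projfacts

variable {A : Matrix (Fin n) (Fin n) ℂ} (hA : A.PosSemidef)

/-- the support projection -/
private noncomputable def sproj {A : Matrix (Fin n) (Fin n) ℂ} (hA : A.PosSemidef) :
    Matrix (Fin n) (Fin n) ℂ :=
  (hA.1.eigenvectorUnitary : Matrix (Fin n) (Fin n) ℂ) *
    diagonal (fun i => ((if hA.1.eigenvalues i = 0 then (0:ℝ) else 1 : ℝ) : ℂ)) *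
    star (hA.1.eigenvectorUnitary : Matrix (Fin n) (Fin n) ℂ)

private lemma spectral' :
    A = (hA.1.eigenvectorUnitary : Matrix (Fin n) (Fin n) ℂ) *
      diagonal (fun i => ((hA.1.eigenvalues i : ℝ) : ℂ)) *
      star (hA.1.eigenvectorUnitary : Matrix (Fin n) (Fin n) ℂ) := by
  exact hA.1.spectral_theorem

private lemma half_mul_neg_half : mrpow A ((1:ℝ)/2) * mrpow A (-((1:ℝ)/2)) = sproj hA := by
  rw [mrpow_eq hA.1, mrpow_eq hA.1, conj_mul_conj, sproj]
  have hd : (fun i => ((hA.1.eigenvalues i ^ ((1:ℝ)/2) : ℝ) : ℂ) *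
      ((hA.1.eigenvalues i ^ (-((1:ℝ)/2)) : ℝ) : ℂ)) =
      (fun i => ((if hA.1.eigenvalues i = 0 then (0:ℝ) else 1 : ℝ) : ℂ)) := by
    funext i
    rw [← Complex.ofReal_mul, rpow_half_mul (hA.eigenvalues_nonneg i)]
  rw [hd]

private lemma neg_half_mul_half : mrpow A (-((1:ℝ)/2)) * mrpow A ((1:ℝ)/2) = sproj hA := by
  rw [mrpow_eq hA.1, mrpow_eq hA.1, conj_mul_conj, sproj]
  have hd : (fun i => ((hA.1.eigenvalues i ^ (-((1:ℝ)/2)) : ℝ) : ℂ) *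
      ((hA.1.eigenvalues i ^ ((1:ℝ)/2) : ℝ) : ℂ)) =
      (fun i => ((if hA.1.eigenvalues i = 0 then (0:ℝ) else 1 : ℝ) : ℂ)) := by
    funext i
    rw [← Complex.ofReal_mul, mul_comm, rpow_half_mul (hA.eigenvalues_nonneg i)]
  rw [hd]

private lemma neg_half_sandwich :
    mrpow A (-((1:ℝ)/2)) * A * mrpow A (-((1:ℝ)/2)) = sproj hA := by
  have key : mrpow A (-((1:ℝ)/2)) *
      ((hA.1.eigenvectorUnitary : Matrix (Fin n) (Fin n) ℂ) *
        diagonal (fun i => ((hA.1.eigenvalues i : ℝ) : ℂ)) *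
        star (hA.1.eigenvectorUnitary : Matrix (Fin n) (Fin n) ℂ)) *
      mrpow A (-((1:ℝ)/2)) = sproj hA := by
    rw [mrpow_eq hA.1, conj_mul_conj, conj_mul_conj, sproj]
    have hd : (fun i => (((hA.1.eigenvalues i ^ (-((1:ℝ)/2)) : ℝ) : ℂ) *
        ((hA.1.eigenvalues i : ℝ) : ℂ)) * ((hA.1.eigenvalues i ^ (-((1:ℝ)/2)) : ℝ) : ℂ)) =
        (fun i => ((if hA.1.eigenvalues i = 0 then (0:ℝ) else 1 : ℝ) : ℂ)) := by
      funext i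
      rw [← Complex.ofReal_mul, ← Complex.ofReal_mul]
      congr 1
      set x := hA.1.eigenvalues i with hxdef
      have hx : 0 ≤ x := hA.eigenvalues_nonneg i
      rcases eq_or_lt_of_le hx with h0 | h0
      · simp [← h0, Real.zero_rpow]
      · rw [if_neg h0.ne']
        rw [mul_assoc]
        nth_rewrite 2 [← Real.rpow_one x]
        rw [← Real.rpow_add h0, ← Real.rpow_add h0]
        norm_num
    rw [hd]
  rw [← spectral' hA] at key
  exact key

private lemma mul_sproj : A * sproj hA = A := by
  have key : ((hA.1.eigenvectorUnitary : Matrix (Fin n) (Fin n) ℂ) *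
      diagonal (fun i => ((hA.1.eigenvalues i : ℝ) : ℂ)) *
      star (hA.1.eigenvectorUnitary : Matrix (Fin n) (Fin n) ℂ)) * sproj hA
      = (hA.1.eigenvectorUnitary : Matrix (Fin n) (Fin n) ℂ) *
      diagonal (fun i => ((hA.1.eigenvalues i : ℝ) : ℂ)) *
      star (hA.1.eigenvectorUnitary : Matrix (Fin n) (Fin n) ℂ) := by
    rw [sproj, conj_mul_conj]
    have hd : (fun i => ((hA.1.eigenvalues i : ℝ) : ℂ) *
        ((if hA.1.eigenvalues i = 0 then (0:ℝ) else 1 : ℝ) : ℂ)) =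
        (fun i => ((hA.1.eigenvalues i : ℝ) : ℂ)) := by
      funext i
      by_cases h : hA.1.eigenvalues i = 0 <;> simp [h]
    rw [hd]
  rw [← spectral' hA] at key
  exact key

private lemma sproj_isHermitian : (sproj hA).IsHermitian :=
  isHermitian_conj_diag _ _

private lemma one_sub_sproj_posSemidef : (1 - sproj hA).PosSemidef := by
  have key : (hA.1.eigenvectorUnitary : Matrix (Fin n) (Fin n) ℂ) *
      diagonal (fun i => ((if hA.1.eigenvalues i = 0 then (1:ℝ) else 0 : ℝ) : ℂ)) *
      star (hA.1.eigenvectorUnitary : Matrix (Fin n) (Fin n) ℂ) = 1 - sproj hA := by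
    have hd : diagonal (fun i => ((if hA.1.eigenvalues i = 0 then (1:ℝ) else 0 : ℝ) : ℂ)) =
        1 - diagonal (fun i => ((if hA.1.eigenvalues i = 0 then (0:ℝ) else 1 : ℝ) : ℂ)) := by
      rw [← diagonal_one, diagonal_sub]
      have : (fun i => ((if hA.1.eigenvalues i = 0 then (1:ℝ) else 0 : ℝ) : ℂ)) =
          (fun i => (1:ℂ) - ((if hA.1.eigenvalues i = 0 then (0:ℝ) else 1 : ℝ) : ℂ)) := by
        funext i
        by_cases h : hA.1.eigenvalues i = 0 <;> simp [h]
      rw [this]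
    rw [sproj, hd, mul_sub, sub_mul, mul_one,
      Matrix.mem_unitaryGroup_iff.mp hA.1.eigenvectorUnitary.2]
  rw [← key]
  exact posSemidef_conj_diag _ (fun i => by by_cases h : hA.1.eigenvalues i = 0 <;> simp [h])

private lemma mrpow_isHermitian (h : A.IsHermitian) (t : ℝ) : (mrpow A t).IsHermitian := by
  rw [mrpow_eq h]
  exact isHermitian_conj_diag _ _

end projfacts

section kernel

private lemma star_sum_elim (v w : Fin n → ℂ) :
    star (Sum.elim v w) = Sum.elim (star v) (star w) := by
  funext i; cases i <;> rfl

private lemma ker_top {A B X : Matrix (Fin n) (Fin n) ℂ}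
    (hH : (fromBlocks A X Xᴴ B).PosSemidef) {v : Fin n → ℂ} (hv : A *ᵥ v = 0) :
    Xᴴ *ᵥ v = 0 := by
  have h0 : star (Sum.elim v (0 : Fin n → ℂ)) ⬝ᵥ
      ((fromBlocks A X Xᴴ B) *ᵥ Sum.elim v (0 : Fin n → ℂ)) = 0 := by
    rw [fromBlocks_mulVec, star_sum_elim, sumElim_dotProduct_sumElim]
    simp [hv]
  have h1 := (hH.dotProduct_mulVec_zero_iff _).mp h0
  rw [fromBlocks_mulVec] at h1
  funext i
  have h2 := congrFun h1 (Sum.inr i)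
  simpa using h2

private lemma ker_bot {A B X : Matrix (Fin n) (Fin n) ℂ}
    (hH : (fromBlocks A X Xᴴ B).PosSemidef) {v : Fin n → ℂ} (hv : B *ᵥ v = 0) :
    X *ᵥ v = 0 := by
  have h0 : star (Sum.elim (0 : Fin n → ℂ) v) ⬝ᵥ
      ((fromBlocks A X Xᴴ B) *ᵥ Sum.elim (0 : Fin n → ℂ) v) = 0 := by
    rw [fromBlocks_mulVec, star_sum_elim, sumElim_dotProduct_sumElim]
    simp [hv]
  have h1 := (hH.dotProduct_mulVec_zero_iff _).mp h0
  rw [fromBlocks_mulVec] at h1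
  funext i
  have h2 := congrFun h1 (Sum.inl i)
  simpa using h2

private lemma eq_zero_of_mulVec {M : Matrix (Fin n) (Fin n) ℂ}
    (h : ∀ v, M *ᵥ v = 0) : M = 0 := by
  ext i j
  have h2 := h (Pi.single j 1)
  rw [mulVec_single] at h2
  have := congrFun h2 i
  simpa using this

end kernel

section contraction

private lemma conj_block {A B X a b : Matrix (Fin n) (Fin n) ℂ}
    (hH : (fromBlocks A X Xᴴ B).PosSemidef) (ha : a.IsHermitian) (hb : b.IsHermitian) :
    (fromBlocks (a*A*a) (a*X*b) (b*Xᴴ*a) (b*B*b)).PosSemidef := by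
  have h := hH.conjTranspose_mul_mul_same (fromBlocks a 0 0 b)
  have he : (fromBlocks a 0 0 b : Matrix (Fin n ⊕ Fin n) (Fin n ⊕ Fin n) ℂ)ᴴ *
      (fromBlocks A X Xᴴ B) * (fromBlocks a 0 0 b)
      = fromBlocks (a*A*a) (a*X*b) (b*Xᴴ*a) (b*B*b) := by
    rw [fromBlocks_conjTranspose, fromBlocks_multiply, fromBlocks_multiply]
    simp [ha.eq, hb.eq]
  rwa [he] at h

private lemma contraction_ineq {P Q K : Matrix (Fin n) (Fin n) ℂ}
    (hM : (fromBlocks P K Kᴴ Q).PosSemidef)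
    (hP : (1 - P).PosSemidef) (hQ : (1 - Q).PosSemidef) (w : Fin n → ℂ) :
    star (K *ᵥ w) ⬝ᵥ (K *ᵥ w) ≤ star w ⬝ᵥ w := by
  have T1 := hM.dotProduct_mulVec_nonneg (Sum.elim (-(K *ᵥ w)) w)
  have T2 := hP.dotProduct_mulVec_nonneg (K *ᵥ w)
  have T3 := hQ.dotProduct_mulVec_nonneg w
  have e1 : star (Sum.elim (-(K *ᵥ w)) w) ⬝ᵥ
      ((fromBlocks P K Kᴴ Q) *ᵥ (Sum.elim (-(K *ᵥ w)) w))
      = star (K *ᵥ w) ⬝ᵥ (P *ᵥ (K *ᵥ w)) + star w ⬝ᵥ (Q *ᵥ w)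
        - star (K *ᵥ w) ⬝ᵥ (K *ᵥ w) - star (K *ᵥ w) ⬝ᵥ (K *ᵥ w) := by
    rw [fromBlocks_mulVec, star_sum_elim, sumElim_dotProduct_sumElim]
    simp only [Sum.elim_comp_inl, Sum.elim_comp_inr, mulVec_neg, star_neg, neg_dotProduct,
      dotProduct_neg, dotProduct_add, neg_neg, neg_add]
    rw [dotProduct_mulVec (star w) Kᴴ, ← star_mulVec]
    ring
  rw [e1] at T1
  have e2 : star (K *ᵥ w) ⬝ᵥ ((1 - P) *ᵥ (K *ᵥ w))
      = star (K *ᵥ w) ⬝ᵥ (K *ᵥ w) - star (K *ᵥ w) ⬝ᵥ (P *ᵥ (K *ᵥ w)) := by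
    rw [sub_mulVec, one_mulVec, dotProduct_sub]
  have e3 : star w ⬝ᵥ ((1 - Q) *ᵥ w) = star w ⬝ᵥ w - star w ⬝ᵥ (Q *ᵥ w) := by
    rw [sub_mulVec, one_mulVec, dotProduct_sub]
  rw [e2] at T2
  rw [e3] at T3
  have h4 := add_nonneg (add_nonneg T1 T2) T3
  have h5 : star (K *ᵥ w) ⬝ᵥ (P *ᵥ (K *ᵥ w)) + star w ⬝ᵥ (Q *ᵥ w)
        - star (K *ᵥ w) ⬝ᵥ (K *ᵥ w) - star (K *ᵥ w) ⬝ᵥ (K *ᵥ w)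
      + (star (K *ᵥ w) ⬝ᵥ (K *ᵥ w) - star (K *ᵥ w) ⬝ᵥ (P *ᵥ (K *ᵥ w)))
      + (star w ⬝ᵥ w - star w ⬝ᵥ (Q *ᵥ w))
      = star w ⬝ᵥ w - star (K *ᵥ w) ⬝ᵥ (K *ᵥ w) := by ring
  rw [h5] at h4
  exact sub_nonneg.mp h4

private lemma sval_le_one {K : Matrix (Fin n) (Fin n) ℂ}
    (hc : ∀ w, star (K *ᵥ w) ⬝ᵥ (K *ᵥ w) ≤ star w ⬝ᵥ w) (j : Fin n) : sVal K j ≤ 1 := by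
  rw [sVal, Real.sqrt_le_one]
  set hK := Matrix.isHermitian_conjTranspose_mul_self K with hKdef
  set i := (Tuple.sort hK.eigenvalues) j.rev with hidef
  show hK.eigenvalues i ≤ 1
  have h := hK.eigenvalues_eq i
  set v := ⇑(hK.eigenvectorBasis i) with hvdef
  rw [← mulVec_mulVec, dotProduct_mulVec, ← star_mulVec] at h
  have hnorm : ‖hK.eigenvectorBasis i‖ = 1 := hK.eigenvectorBasis.orthonormal.1 i
  have hv : star v ⬝ᵥ v = 1 := by
    have h3 := EuclideanSpace.inner_eq_star_dotProduct (hK.eigenvectorBasis i)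
      (hK.eigenvectorBasis i)
    rw [inner_self_eq_norm_sq_to_K, hnorm] at h3
    have h4 := h3.symm
    simp at h4
    rw [dotProduct_comm]
    exact h4
  have h2 := hc v
  rw [h]
  calc Complex.re (star (K *ᵥ v) ⬝ᵥ (K *ᵥ v)) ≤ Complex.re (star v ⬝ᵥ v) :=
        (Complex.le_def.mp h2).1
    _ = 1 := by rw [hv]; simp

end contraction

theorem stmt_4 {n : ℕ} (A B X : Matrix (Fin n) (Fin n) ℂ)
    (hH : (Matrix.fromBlocks A X Xᴴ B).PosSemidef) :
    ∃ K : Matrix (Fin n) (Fin n) ℂ, (∀ j, sVal K j ≤ 1) ∧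
      X = mrpow A (1/2) * K * mrpow B (1/2) := by
  have hA : A.PosSemidef := by
    have h := hH.submatrix Sum.inl
    have he : (fromBlocks A X Xᴴ B).submatrix Sum.inl Sum.inl = A := by
      ext i j; simp [Matrix.submatrix_apply]
    rwa [he] at h
  have hB : B.PosSemidef := by
    have h := hH.submatrix Sum.inr
    have he : (fromBlocks A X Xᴴ B).submatrix Sum.inr Sum.inr = B := by
      ext i j; simp [Matrix.submatrix_apply]
    rwa [he] at h
  set a := mrpow A (-((1:ℝ)/2)) with hadef
  set b := mrpow B (-((1:ℝ)/2)) with hbdef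
  have haH : a.IsHermitian := mrpow_isHermitian hA.1 _
  have hbH : b.IsHermitian := mrpow_isHermitian hB.1 _
  refine ⟨a * X * b, ?_, ?_⟩
  · apply sval_le_one
    intro w
    have hM := conj_block hH haH hbH
    have hKH : b * Xᴴ * a = (a * X * b)ᴴ := by
      rw [conjTranspose_mul, conjTranspose_mul, haH.eq, hbH.eq, mul_assoc]
    rw [hKH, neg_half_sandwich hA, neg_half_sandwich hB] at hM
    exact contraction_ineq hM (one_sub_sproj_posSemidef hA) (one_sub_sproj_posSemidef hB) w
  · -- X = A^{1/2} K B^{1/2}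
    have hPX : sproj hA * X = X := by
      have h1 : Xᴴ * (1 - sproj hA) = 0 := by
        apply eq_zero_of_mulVec
        intro v
        rw [← mulVec_mulVec]
        apply ker_top hH
        have hz : A * (1 - sproj hA) = 0 := by
          rw [mul_sub, mul_one, mul_sproj hA, sub_self]
        rw [mulVec_mulVec, hz, zero_mulVec]
      have h2 := congrArg conjTranspose h1
      rw [conjTranspose_mul, conjTranspose_conjTranspose, conjTranspose_zero,
        conjTranspose_sub, conjTranspose_one, (sproj_isHermitian hA).eq, sub_mul,
        one_mul] at h2
      have := sub_eq_zero.mp h2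
      exact this.symm
    have hXQ : X * sproj hB = X := by
      have h1 : X * (1 - sproj hB) = 0 := by
        apply eq_zero_of_mulVec
        intro v
        rw [← mulVec_mulVec]
        apply ker_bot hH
        have hz : B * (1 - sproj hB) = 0 := by
          rw [mul_sub, mul_one, mul_sproj hB, sub_self]
        rw [mulVec_mulVec, hz, zero_mulVec]
      rw [mul_sub, mul_one] at h1
      have := sub_eq_zero.mp h1
      exact this.symm
    have hgroup : mrpow A (1/2) * (a * X * b) * mrpow B (1/2)
        = (mrpow A ((1:ℝ)/2) * a) * X * (b * mrpow B ((1:ℝ)/2)) := by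
      simp only [mul_assoc]
    rw [hgroup, half_mul_neg_half hA, neg_half_mul_half hB, hPX, hXQ]
end

section
/- If the block matrix [[A, X],[X*, B]] is PPT, then for j = 1,...,n, s_j(X) ≤ s_{⌊(j+1)/2⌋}((A+B)/2), where s_j are singular values arranged in decreasing order. -/
open Matrix
open scoped ComplexOrder

open scoped InnerProductSpace

namespace SV

variable {n : ℕ}

lemma toEuc_eig {H : Matrix (Fin n) (Fin n) ℂ} (hH : H.IsHermitian) (i : Fin n) :
    Matrix.toEuclideanLin H (hH.eigenvectorBasis i)
      = (hH.eigenvalues i : ℂ) • hH.eigenvectorBasis i := by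
  have h := hH.mulVec_eigenvectorBasis i
  apply (WithLp.equiv 2 (Fin n → ℂ)).injective
  ext j
  have := congrFun h j
  simpa [Matrix.toEuclideanLin_apply, Complex.real_smul] using this

lemma repr_toEuc {H : Matrix (Fin n) (Fin n) ℂ} (hH : H.IsHermitian)
    (v : EuclideanSpace ℂ (Fin n)) (i : Fin n) :
    hH.eigenvectorBasis.repr (Matrix.toEuclideanLin H v) i
      = (hH.eigenvalues i : ℂ) * hH.eigenvectorBasis.repr v i := by
  rw [OrthonormalBasis.repr_apply_apply, OrthonormalBasis.repr_apply_apply,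
    ← (Matrix.isHermitian_iff_isSymmetric.1 hH) (hH.eigenvectorBasis i) v,
    toEuc_eig hH i, inner_smul_left]
  simp [Complex.conj_ofReal]

end SV

namespace SV
variable {n : ℕ}

lemma quad_eq {H : Matrix (Fin n) (Fin n) ℂ} (hH : H.IsHermitian)
    (v : EuclideanSpace ℂ (Fin n)) :
    ⟪v, Matrix.toEuclideanLin H v⟫_ℂ
      = ∑ i, ((hH.eigenvalues i * ‖hH.eigenvectorBasis.repr v i‖ ^ 2 : ℝ) : ℂ) := by
  rw [← LinearIsometryEquiv.inner_map_map hH.eigenvectorBasis.repr]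
  rw [PiLp.inner_apply]
  refine Finset.sum_congr rfl fun i _ => ?_
  rw [repr_toEuc hH v i]
  simp only [RCLike.inner_apply]
  rw [mul_assoc, mul_comm ((hH.eigenvalues i : ℂ)) _, RCLike.mul_conj]
  push_cast
  exact mul_comm _ _

end SV

namespace SV
variable {n : ℕ}

lemma norm_sq_repr (b : OrthonormalBasis (Fin n) ℂ (EuclideanSpace ℂ (Fin n)))
    (v : EuclideanSpace ℂ (Fin n)) :
    ‖v‖ ^ 2 = ∑ i, ‖b.repr v i‖ ^ 2 := by
  rw [← b.repr.norm_map v, EuclideanSpace.norm_eq, Real.sq_sqrt]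
  positivity

lemma repr_zero_of_span (b : OrthonormalBasis (Fin n) ℂ (EuclideanSpace ℂ (Fin n)))
    (I : Finset (Fin n)) {v : EuclideanSpace ℂ (Fin n)}
    (hv : v ∈ Submodule.span ℂ (⇑b '' ↑I)) {i : Fin n} (hi : i ∉ I) :
    b.repr v i = 0 := by
  rw [OrthonormalBasis.repr_apply_apply]
  induction hv using Submodule.span_induction with
  | mem x hx =>
    obtain ⟨j, hj, rfl⟩ := hx
    exact b.orthonormal.2 (fun h => hi (h ▸ hj))
  | zero => simp
  | add x y _ _ hx hy => rw [inner_add_right, hx, hy, add_zero]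
  | smul c x _ hx => rw [inner_smul_right, hx, mul_zero]

end SV

namespace SV
variable {n : ℕ}

lemma quad_re {H : Matrix (Fin n) (Fin n) ℂ} (hH : H.IsHermitian)
    (v : EuclideanSpace ℂ (Fin n)) :
    (⟪v, Matrix.toEuclideanLin H v⟫_ℂ).re
      = ∑ i, hH.eigenvalues i * ‖hH.eigenvectorBasis.repr v i‖ ^ 2 := by
  rw [quad_eq hH v]
  rw [Complex.re_sum]
  refine Finset.sum_congr rfl fun i _ => ?_
  exact Complex.ofReal_re _

lemma quad_le {H : Matrix (Fin n) (Fin n) ℂ} (hH : H.IsHermitian)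
    (I : Finset (Fin n)) (c : ℝ) (hc : ∀ i ∈ I, hH.eigenvalues i ≤ c)
    {v : EuclideanSpace ℂ (Fin n)}
    (hv : v ∈ Submodule.span ℂ (⇑(hH.eigenvectorBasis) '' ↑I)) :
    (⟪v, Matrix.toEuclideanLin H v⟫_ℂ).re ≤ c * ‖v‖ ^ 2 := by
  rw [quad_re hH v, norm_sq_repr hH.eigenvectorBasis v, Finset.mul_sum]
  refine Finset.sum_le_sum fun i _ => ?_
  by_cases hi : i ∈ I
  · exact mul_le_mul_of_nonneg_right (hc i hi) (by positivity)
  · rw [repr_zero_of_span _ I hv hi]; simp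

lemma quad_ge {H : Matrix (Fin n) (Fin n) ℂ} (hH : H.IsHermitian)
    (I : Finset (Fin n)) (c : ℝ) (hc : ∀ i ∈ I, c ≤ hH.eigenvalues i)
    {v : EuclideanSpace ℂ (Fin n)}
    (hv : v ∈ Submodule.span ℂ (⇑(hH.eigenvectorBasis) '' ↑I)) :
    c * ‖v‖ ^ 2 ≤ (⟪v, Matrix.toEuclideanLin H v⟫_ℂ).re := by
  rw [quad_re hH v, norm_sq_repr hH.eigenvectorBasis v, Finset.mul_sum]
  refine Finset.sum_le_sum fun i _ => ?_
  by_cases hi : i ∈ I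
  · exact mul_le_mul_of_nonneg_right (hc i hi) (by positivity)
  · rw [repr_zero_of_span _ I hv hi]; simp

end SV

namespace SV
variable {n : ℕ}

lemma finrank_span_ob (b : OrthonormalBasis (Fin n) ℂ (EuclideanSpace ℂ (Fin n)))
    (I : Finset (Fin n)) :
    Module.finrank ℂ (Submodule.span ℂ (⇑b '' ↑I)) = I.card := by
  have li : LinearIndependent ℂ (fun i : ↑(↑I : Set (Fin n)) => b i) :=
    b.orthonormal.linearIndependent.comp Subtype.val Subtype.val_injective
  have h := finrank_span_eq_card li
  rw [show Set.range (fun i : ↑(↑I : Set (Fin n)) => b i) = ⇑b '' ↑I from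
    Set.range_restrict _ _] at h
  rw [h]
  simp

lemma finrank_comap_ge (g : EuclideanSpace ℂ (Fin n) →ₗ[ℂ] EuclideanSpace ℂ (Fin n))
    (S : Submodule ℂ (EuclideanSpace ℂ (Fin n))) :
    Module.finrank ℂ S ≤ Module.finrank ℂ (S.comap g) := by
  have h1 : S.comap g = LinearMap.ker (S.mkQ ∘ₗ g) := by
    rw [LinearMap.ker_comp, Submodule.ker_mkQ]
  have h2 := LinearMap.finrank_range_add_finrank_ker (S.mkQ ∘ₗ g)
  have h3 : Module.finrank ℂ (LinearMap.range (S.mkQ ∘ₗ g))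
      ≤ Module.finrank ℂ (EuclideanSpace ℂ (Fin n) ⧸ S) := Submodule.finrank_le _
  have h4 := S.finrank_quotient_add_finrank
  rw [h1]
  omega

lemma finrank_inf3 (T S1 S2 : Submodule ℂ (EuclideanSpace ℂ (Fin n))) :
    Module.finrank ℂ T + Module.finrank ℂ S1 + Module.finrank ℂ S2
      ≤ Module.finrank ℂ (T ⊓ S1 ⊓ S2 : Submodule ℂ (EuclideanSpace ℂ (Fin n))) + 2 * n := by
  have e1 := Submodule.finrank_sup_add_finrank_inf_eq T S1
  have e2 := Submodule.finrank_sup_add_finrank_inf_eq (T ⊓ S1) S2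
  have b1 : Module.finrank ℂ (T ⊔ S1 : Submodule ℂ _) ≤ n := by
    simpa using Submodule.finrank_le (T ⊔ S1)
  have b2 : Module.finrank ℂ ((T ⊓ S1) ⊔ S2 : Submodule ℂ _) ≤ n := by
    simpa using Submodule.finrank_le ((T ⊓ S1) ⊔ S2)
  omega

lemma card_filter_ge (f : Fin n → ℝ) (j : Fin n) :
    j.val + 1 ≤ (Finset.univ.filter fun i => (f ∘ Tuple.sort f) j.rev ≤ f i).card := by
  have h1 : ∀ i ∈ Finset.Ici j.rev, Tuple.sort f i ∈
      Finset.univ.filter fun i => (f ∘ Tuple.sort f) j.rev ≤ f i := by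
    intro i hi
    simp only [Finset.mem_filter, Finset.mem_univ, true_and]
    exact Tuple.monotone_sort f (Finset.mem_Ici.1 hi)
  have h := Finset.card_le_card_of_injOn _ h1 ((Tuple.sort f).injective.injOn)
  rw [Fin.card_Ici] at h
  have hr := Fin.val_rev j
  have := j.isLt
  omega

lemma card_filter_le (f : Fin n → ℝ) (k : Fin n) :
    n - k.val ≤ (Finset.univ.filter fun i => f i ≤ (f ∘ Tuple.sort f) k.rev).card := by
  have h1 : ∀ i ∈ Finset.Iic k.rev, Tuple.sort f i ∈
      Finset.univ.filter fun i => f i ≤ (f ∘ Tuple.sort f) k.rev := by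
    intro i hi
    simp only [Finset.mem_filter, Finset.mem_univ, true_and]
    exact Tuple.monotone_sort f (Finset.mem_Iic.1 hi)
  have h := Finset.card_le_card_of_injOn _ h1 ((Tuple.sort f).injective.injOn)
  rw [Fin.card_Iic] at h
  have hr := Fin.val_rev k
  have := k.isLt
  omega

end SV

namespace SV
variable {n : ℕ}

lemma inner_gram (Y : Matrix (Fin n) (Fin n) ℂ) (v : EuclideanSpace ℂ (Fin n)) :
    (⟪v, Matrix.toEuclideanLin (Yᴴ * Y) v⟫_ℂ).re = ‖Matrix.toEuclideanLin Y v‖ ^ 2 := by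
  have h : ⟪v, Matrix.toEuclideanLin (Yᴴ * Y) v⟫_ℂ
      = ⟪Matrix.toEuclideanLin Y v, Matrix.toEuclideanLin Y v⟫_ℂ := by
    rw [EuclideanSpace.inner_eq_star_dotProduct, EuclideanSpace.inner_eq_star_dotProduct,
      Matrix.ofLp_toEuclideanLin_apply, Matrix.ofLp_toEuclideanLin_apply,
      star_mulVec, ← Matrix.mulVec_mulVec, dotProduct_comm, dotProduct_mulVec]
    exact dotProduct_comm _ _
  rw [h, inner_self_eq_norm_sq_to_K ]
  norm_cast

end SV

namespace SV
variable {n : ℕ}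

lemma conj_cross (X : Matrix (Fin n) (Fin n) ℂ) (u v : Fin n → ℂ) :
    (dotProduct (star v) (Xᴴ *ᵥ u)).re = (dotProduct (star u) (X *ᵥ v)).re := by
  have h : dotProduct (star v) (Xᴴ *ᵥ u) = star (dotProduct (star u) (X *ᵥ v)) := by
    rw [Matrix.star_dotProduct]
    congr 1
    rw [Matrix.star_mulVec, Matrix.conjTranspose_conjTranspose, ← Matrix.dotProduct_mulVec]
  rw [h, Complex.star_def, Complex.conj_re]

lemma block_quad {A B X : Matrix (Fin n) (Fin n) ℂ}
    (hM : (Matrix.fromBlocks A X Xᴴ B).PosSemidef) (u v : Fin n → ℂ) :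
    2 * (dotProduct (star u) (X *ᵥ v)).re
      ≤ (dotProduct (star u) (A *ᵥ u)).re + (dotProduct (star v) (B *ᵥ v)).re := by
  have h0 := hM.dotProduct_mulVec_nonneg (Sum.elim u (-v))
  rw [Complex.le_def] at h0
  have hre := h0.1
  have hstar : star (Sum.elim u (-v)) = Sum.elim (star u) (star (-v)) := by
    funext i; cases i <;> simp
  rw [hstar, Matrix.fromBlocks_mulVec, sumElim_dotProduct_sumElim] at hre
  simp only [Sum.elim_comp_inl, Sum.elim_comp_inr, Matrix.mulVec_neg, dotProduct_add,
    dotProduct_neg, neg_dotProduct, star_neg, Complex.add_re, Complex.neg_re,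
    Complex.zero_re, neg_neg] at hre
  have hc := conj_cross X u v
  linarith

lemma ppt_quad {A B X : Matrix (Fin n) (Fin n) ℂ}
    (h1 : (Matrix.fromBlocks A X Xᴴ B).PosSemidef)
    (h2 : (Matrix.fromBlocks A Xᴴ X B).PosSemidef) (u v : Fin n → ℂ) :
    2 * (dotProduct (star u) (X *ᵥ v)).re
      ≤ (dotProduct (star u) (((1/2 : ℂ) • (A + B)) *ᵥ u)).re
        + (dotProduct (star v) (((1/2 : ℂ) • (A + B)) *ᵥ v)).re := by
  have e1 := block_quad h1 u v
  have h2' : (Matrix.fromBlocks A Xᴴ (Xᴴ)ᴴ B).PosSemidef := by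
    rwa [Matrix.conjTranspose_conjTranspose]
  have e2 := block_quad h2' v u
  rw [conj_cross X u v] at e2
  have ha : ∀ w : Fin n → ℂ, (dotProduct (star w) (((1/2 : ℂ) • (A + B)) *ᵥ w)).re
      = ((dotProduct (star w) (A *ᵥ w)).re + (dotProduct (star w) (B *ᵥ w)).re) / 2 := by
    intro w
    rw [Matrix.smul_mulVec, dotProduct_smul, smul_eq_mul, Complex.mul_re,
      Matrix.add_mulVec, dotProduct_add, Complex.add_re]
    norm_num
    ring
  rw [ha u, ha v]
  linarith

end SV


theorem stmt_8 {n : ℕ} (A B X : Matrix (Fin n) (Fin n) ℂ)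
    (hPPT : IsPPT A X B) (j : Fin n) :
    sVal X j ≤ sVal ((1/2 : ℂ) • (A + B))
      ⟨j.val / 2, lt_of_le_of_lt (Nat.div_le_self _ _) j.isLt⟩ := by
  obtain ⟨h1, h2⟩ := hPPT
  set C : Matrix (Fin n) (Fin n) ℂ := (1/2 : ℂ) • (A + B) with hCdef
  have hX := Matrix.isHermitian_conjTranspose_mul_self X
  have hC := Matrix.isHermitian_conjTranspose_mul_self C
  set k : Fin n := ⟨j.val / 2, lt_of_le_of_lt (Nat.div_le_self _ _) j.isLt⟩ with hk
  set α : ℝ := (hX.eigenvalues ∘ Tuple.sort hX.eigenvalues) j.rev with hα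
  set β : ℝ := (hC.eigenvalues ∘ Tuple.sort hC.eigenvalues) k.rev with hβ
  show Real.sqrt α ≤ Real.sqrt β
  -- subspaces
  set IX : Finset (Fin n) := Finset.univ.filter (fun i => α ≤ hX.eigenvalues i) with hIX
  set IC : Finset (Fin n) := Finset.univ.filter (fun i => hC.eigenvalues i ≤ β) with hIC
  set T : Submodule ℂ (EuclideanSpace ℂ (Fin n)) :=
    Submodule.span ℂ (⇑hX.eigenvectorBasis '' ↑IX) with hT
  set S : Submodule ℂ (EuclideanSpace ℂ (Fin n)) :=
    Submodule.span ℂ (⇑hC.eigenvectorBasis '' ↑IC) with hS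
  set S' : Submodule ℂ (EuclideanSpace ℂ (Fin n)) :=
    S.comap (Matrix.toEuclideanLin X) with hS'
  -- dimension counts
  have hcT : (j : ℕ) + 1 ≤ Module.finrank ℂ T := by
    rw [hT, SV.finrank_span_ob]
    exact SV.card_filter_ge hX.eigenvalues j
  have hcS : n - (k : ℕ) ≤ Module.finrank ℂ S := by
    rw [hS, SV.finrank_span_ob]
    exact SV.card_filter_le hC.eigenvalues k
  have hcS' : n - (k : ℕ) ≤ Module.finrank ℂ S' :=
    le_trans hcS (SV.finrank_comap_ge _ _)
  have hdim := SV.finrank_inf3 T S S'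
  have hkj : 2 * (k : ℕ) ≤ (j : ℕ) := by
    rw [hk]; exact Nat.mul_div_le _ 2 -- check
  have hjn := j.isLt
  have hpos : 0 < Module.finrank ℂ (T ⊓ S ⊓ S' : Submodule ℂ (EuclideanSpace ℂ (Fin n))) := by
    omega
  -- nonzero vector
  have hne : (T ⊓ S ⊓ S' : Submodule ℂ (EuclideanSpace ℂ (Fin n))) ≠ ⊥ := by
    intro hbot
    rw [hbot, finrank_bot] at hpos
    exact lt_irrefl _ hpos
  obtain ⟨v, hv, hv0⟩ := Submodule.exists_mem_ne_zero_of_ne_bot hne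
  obtain ⟨⟨hvT, hvS⟩, hvS'⟩ := hv
  have hvXS : Matrix.toEuclideanLin X v ∈ S := hvS'
  -- quadratic bounds
  have hαv : α * ‖v‖ ^ 2 ≤ ‖Matrix.toEuclideanLin X v‖ ^ 2 := by
    rw [← SV.inner_gram X v]
    exact SV.quad_ge hX IX α (fun i hi => (Finset.mem_filter.1 hi).2) hvT
  have hβw : ∀ w, w ∈ S → ‖Matrix.toEuclideanLin C w‖ ^ 2 ≤ β * ‖w‖ ^ 2 := by
    intro w hw
    rw [← SV.inner_gram C w]
    exact SV.quad_le hC IC β (fun i hi => (Finset.mem_filter.1 hi).2) hw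
  rcases le_or_gt α 0 with h0 | h0
  · rw [Real.sqrt_eq_zero_of_nonpos h0]
    exact Real.sqrt_nonneg _
  · have hnv : 0 < ‖v‖ := norm_pos_iff.2 hv0
    set w : EuclideanSpace ℂ (Fin n) := Matrix.toEuclideanLin X v with hw
    set t : ℝ := ‖w‖ with htdef
    have ht2 : α * ‖v‖ ^ 2 ≤ t ^ 2 := hαv
    have ht : 0 < t := by nlinarith [norm_nonneg w, mul_pos h0 (pow_pos hnv 2)]
    set u₀ : EuclideanSpace ℂ (Fin n) := ((t⁻¹ : ℝ) : ℂ) • w with hu₀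
    set v₀ : EuclideanSpace ℂ (Fin n) := ((‖v‖⁻¹ : ℝ) : ℂ) • v with hv₀
    have hu₀S : u₀ ∈ S := S.smul_mem _ hvXS
    have hv₀S : v₀ ∈ S := S.smul_mem _ hvS
    have hnu₀ : ‖u₀‖ = 1 := by
      rw [hu₀, norm_smul]
      simp [abs_of_pos ht, inv_mul_cancel₀ ht.ne']
      exact inv_mul_cancel₀ ht.ne'
    have hnv₀ : ‖v₀‖ = 1 := by
      rw [hv₀, norm_smul]
      simp [abs_of_pos hnv, inv_mul_cancel₀ hnv.ne']
    have hcs : ∀ z : EuclideanSpace ℂ (Fin n), ‖z‖ = 1 → z ∈ S →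
        (⟪z, Matrix.toEuclideanLin C z⟫_ℂ).re ≤ Real.sqrt β := by
      intro z hz hzS
      have hq : ‖Matrix.toEuclideanLin C z‖ ^ 2 ≤ β := by
        have := hβw z hzS
        rwa [hz, one_pow, mul_one] at this
      have h3' : ‖Matrix.toEuclideanLin C z‖ ≤ Real.sqrt β := by
        rw [← Real.sqrt_sq (norm_nonneg (Matrix.toEuclideanLin C z))]
        exact Real.sqrt_le_sqrt hq
      calc (⟪z, Matrix.toEuclideanLin C z⟫_ℂ).re
          ≤ ‖⟪z, Matrix.toEuclideanLin C z⟫_ℂ‖ := Complex.re_le_norm _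
        _ ≤ ‖z‖ * ‖Matrix.toEuclideanLin C z‖ := norm_inner_le_norm _ _
        _ ≤ Real.sqrt β := by rw [hz, one_mul]; exact h3'
    have hinner : (⟪u₀, Matrix.toEuclideanLin X v₀⟫_ℂ).re = t⁻¹ * ‖v‖⁻¹ * t ^ 2 := by
      rw [hu₀, hv₀, LinearMap.map_smul, inner_smul_left, inner_smul_right, ← hw,
        inner_self_eq_norm_sq_to_K]
      rw [Complex.conj_ofReal, ← htdef]
      simp only [Complex.mul_re, Complex.ofReal_re, Complex.ofReal_im, RCLike.ofReal_re,
        RCLike.ofReal_im, Complex.coe_algebraMap, zero_mul, mul_zero, sub_zero, zero_sub,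
        ← Complex.ofReal_pow]
      ring
    have key := SV.ppt_quad h1 h2 (WithLp.equiv 2 (Fin n → ℂ) u₀) (WithLp.equiv 2 (Fin n → ℂ) v₀)
    have b1 : dotProduct (star (WithLp.equiv 2 (Fin n → ℂ) u₀))
        (X *ᵥ (WithLp.equiv 2 (Fin n → ℂ) v₀)) = ⟪u₀, Matrix.toEuclideanLin X v₀⟫_ℂ := by
        rw [EuclideanSpace.inner_eq_star_dotProduct, Matrix.ofLp_toEuclideanLin_apply]; exact dotProduct_comm _ _
    have b2 : dotProduct (star (WithLp.equiv 2 (Fin n → ℂ) u₀))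
        (((1/2 : ℂ) • (A + B)) *ᵥ (WithLp.equiv 2 (Fin n → ℂ) u₀))
        = ⟪u₀, Matrix.toEuclideanLin C u₀⟫_ℂ := by
        rw [EuclideanSpace.inner_eq_star_dotProduct, Matrix.ofLp_toEuclideanLin_apply]; exact dotProduct_comm _ _
    have b3 : dotProduct (star (WithLp.equiv 2 (Fin n → ℂ) v₀))
        (((1/2 : ℂ) • (A + B)) *ᵥ (WithLp.equiv 2 (Fin n → ℂ) v₀))
        = ⟪v₀, Matrix.toEuclideanLin C v₀⟫_ℂ := by
        rw [EuclideanSpace.inner_eq_star_dotProduct, Matrix.ofLp_toEuclideanLin_apply]; exact dotProduct_comm _ _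
    rw [b1, b2, b3, hinner] at key
    have hcu := hcs u₀ hnu₀ hu₀S
    have hcv := hcs v₀ hnv₀ hv₀S
    have hiv : ‖v‖⁻¹ * ‖v‖ = 1 := inv_mul_cancel₀ hnv.ne'
    have hit : t⁻¹ * t = 1 := inv_mul_cancel₀ ht.ne'
    have hrw : t⁻¹ * ‖v‖⁻¹ * t ^ 2 = t * ‖v‖⁻¹ := by
      field_simp
    rw [hrw] at key
    have hfin : t * ‖v‖⁻¹ ≤ Real.sqrt β := by linarith
    have hlhs : Real.sqrt α ≤ t * ‖v‖⁻¹ := by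
      rw [← Real.sqrt_sq (by positivity : (0:ℝ) ≤ t * ‖v‖⁻¹)]
      apply Real.sqrt_le_sqrt
      rw [mul_pow]
      calc α = α * ‖v‖ ^ 2 * (‖v‖⁻¹) ^ 2 := by field_simp
        _ ≤ t ^ 2 * (‖v‖⁻¹) ^ 2 := mul_le_mul_of_nonneg_right ht2 (by positivity)
    exact le_trans hlhs hfin
end

section
/- If H = [[A, X],[X*, B]] is positive semidefinite and X = U|X| is the polar decomposition of X with U unitary, then [[U*AU, |X|],[|X|, B]] is PPT. -/
open Matrix
open scoped ComplexOrder

lemma mrpow_isHermitian_s11 {n : ℕ} {A : Matrix (Fin n) (Fin n) ℂ} (t : ℝ) :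
    (mrpow A t).IsHermitian := by
  unfold mrpow
  split
  · simp [Matrix.IsHermitian, Matrix.conjTranspose_mul, Matrix.diagonal_conjTranspose,
      Matrix.mul_assoc, Matrix.star_eq_conjTranspose, Pi.star_def, Complex.conj_ofReal]
  · simp [Matrix.IsHermitian]

theorem stmt_11 {n : ℕ} (A B X : Matrix (Fin n) (Fin n) ℂ)
    (hH : (Matrix.fromBlocks A X Xᴴ B).PosSemidef)
    (U : Matrix (Fin n) (Fin n) ℂ) (hU : U ∈ Matrix.unitaryGroup (Fin n) ℂ)
    (hpolar : X = U * matAbs X) :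
    IsPPT (Uᴴ * A * U) (matAbs X) B := by
  have habs : (matAbs X).IsHermitian := mrpow_isHermitian_s11 _
  have hUU : Uᴴ * U = 1 := by simpa [Matrix.star_eq_conjTranspose] using hU.1
  have hUX : Uᴴ * X = matAbs X := by
    conv_lhs => rw [hpolar]
    rw [← Matrix.mul_assoc, hUU, Matrix.one_mul]
  have hXU : Xᴴ * U = matAbs X := by
    conv_lhs => rw [hpolar]
    rw [Matrix.conjTranspose_mul, habs.eq, Matrix.mul_assoc, hUU, Matrix.mul_one]
  have key : (Matrix.fromBlocks (Uᴴ * A * U) (matAbs X) (matAbs X) B).PosSemidef := by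
    have h2 := hH.conjTranspose_mul_mul_same (Matrix.fromBlocks U 0 0 (1 : Matrix (Fin n) (Fin n) ℂ))
    rw [Matrix.fromBlocks_conjTranspose, Matrix.fromBlocks_multiply, Matrix.fromBlocks_multiply] at h2
    simpa [hUX, hXU, Matrix.mul_assoc] using h2
  exact ⟨by rwa [habs.eq], by rwa [habs.eq]⟩
end
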